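/- arXiv:2412.18595 — 2 statements merged into one kernel-verified Lean document; each statement's English description precedes it below -/
import Mathlib

section
/- Let G be a connected graph with subgraphs G_1 and G_2 such that G = G_1 ∪ G_2 and G_1 ∩ G_2 is a spanning connected subgraph of G. Then b(G) ≤ b(G_1) + b(G_2). -/
open scoped Classical

noncomputable section

/-- Helper: quotients of finite types are finite. -/
noncomputable def quotFintype {α : Type} [Fintype α] (r : α → α → Prop) : Fintype (Quot r) :=
  Fintype.ofSurjective (Quot.mk r) fun q => Quot.exists_rep q

/-- A finite multigraph.  Each edge `e` carries an (arbitrarily chosen) ordering of its two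
endpoints, `fst e` and `snd e`; a loop is an edge with `fst e = snd e`. -/
structure Multigraph where
  V : Type
  E : Type
  fintV : Fintype V
  fintE : Fintype E
  fst : E → V
  snd : E → V

attribute [instance] Multigraph.fintV Multigraph.fintE

namespace Multigraph

variable (G : Multigraph)

/-- Incidence of a vertex and an edge, modulo 2 (a loop is incident twice, i.e. 0 mod 2). -/
noncomputable def inc (v : G.V) (e : G.E) : ZMod 2 :=
  (if G.fst e = v then 1 else 0) + (if G.snd e = v then 1 else 0)

/-- The cycle space of `G` over `F_2`: characteristic vectors of edge sets in which every
vertex has even degree (i.e. Eulerian subgraphs), with addition = symmetric difference. -/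
noncomputable def cycleSpace : Submodule (ZMod 2) (G.E → ZMod 2) where
  carrier := {x | ∀ v : G.V, ∑ e : G.E, G.inc v e * x e = 0}
  zero_mem' := by intro v; simp
  add_mem' := by
    intro a b ha hb v
    have h : ∀ e : G.E, G.inc v e * (a + b) e = G.inc v e * a e + G.inc v e * b e := by
      intro e
      show G.inc v e * (a e + b e) = G.inc v e * a e + G.inc v e * b e
      ring
    rw [Finset.sum_congr rfl fun e _ => h e, Finset.sum_add_distrib, ha v, hb v, add_zero]
  smul_mem' := by
    intro c x hx v
    have h : ∀ e : G.E, G.inc v e * (c • x) e = c * (G.inc v e * x e) := by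
      intro e
      show G.inc v e * (c * x e) = c * (G.inc v e * x e)
      ring
    rw [Finset.sum_congr rfl fun e _ => h e, ← Finset.mul_sum, hx v, mul_zero]

/-- The charge of an edge `e` with respect to a collection `B` of (characteristic vectors of)
subgraphs: the number of members of `B` containing `e`. -/
noncomputable def charge (B : Finset (G.E → ZMod 2)) (e : G.E) : ℕ :=
  (B.filter fun x => x e ≠ 0).card

/-- `B` is a basis of the cycle space of `G`. -/
def IsCycleBasis (B : Finset (G.E → ZMod 2)) : Prop :=
  (∀ x ∈ B, x ∈ G.cycleSpace) ∧
    LinearIndependent (ZMod 2) (fun x : B => (x : G.E → ZMod 2)) ∧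
    Submodule.span (ZMod 2) (B : Set (G.E → ZMod 2)) = G.cycleSpace

/-- `B` is a `k`-basis: a basis of the cycle space in which every edge has charge at most `k`. -/
def IsKBasis (k : ℕ) (B : Finset (G.E → ZMod 2)) : Prop :=
  G.IsCycleBasis B ∧ ∀ e : G.E, G.charge B e ≤ k

/-- The basis number of `G`: the least `k` such that `G` has a `k`-basis. -/
noncomputable def basisNum : ℕ := sInf {k | ∃ B, G.IsKBasis k B}

/-- Adjacency of two vertices. -/
def Adj (a b : G.V) : Prop :=
  ∃ e : G.E, (G.fst e = a ∧ G.snd e = b) ∨ (G.fst e = b ∧ G.snd e = a)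

/-- Connectivity. -/
def Connected : Prop :=
  Nonempty G.V ∧ ∀ a b : G.V, Relation.ReflTransGen G.Adj a b

/-- Degree of a vertex (a loop counts twice). -/
noncomputable def degree (v : G.V) : ℕ :=
  ∑ e : G.E, ((if G.fst e = v then 1 else 0) + (if G.snd e = v then 1 else 0))

/-- The subgraph with the same vertex set and edge set restricted to `S`. -/
noncomputable def edgeRestrict (S : Set G.E) : Multigraph where
  V := G.V
  E := S
  fintV := G.fintV
  fintE := (Set.toFinite S).fintype
  fst := fun e => G.fst e.1
  snd := fun e => G.snd e.1

/-- Deletion of a vertex (and all edges incident with it). -/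
noncomputable def deleteVertex (v : G.V) : Multigraph where
  V := {u : G.V // u ≠ v}
  E := {e : G.E // G.fst e ≠ v ∧ G.snd e ≠ v}
  fintV := by classical exact inferInstance
  fintE := by classical exact inferInstance
  fst := fun e => ⟨G.fst e.1, e.2.1⟩
  snd := fun e => ⟨G.snd e.1, e.2.2⟩

/-- `G` is 2-connected: at least 3 vertices, connected, and no cutvertex. -/
def TwoConnected : Prop :=
  G.Connected ∧ 3 ≤ Nat.card G.V ∧ ∀ v : G.V, (G.deleteVertex v).Connected

/-- A cycle of length `n` in `G`: `n` distinct vertices and `n` distinct edges, with edge `i`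
joining vertex `i` to vertex `i+1` (cyclically). -/
def IsCycleOn (n : ℕ) (vs : Fin n → G.V) (es : Fin n → G.E) : Prop :=
  Function.Injective vs ∧ Function.Injective es ∧
    ∀ i : Fin n,
      (G.fst (es i) = vs i ∧ G.snd (es i) = vs (finRotate n i)) ∨
      (G.fst (es i) = vs (finRotate n i) ∧ G.snd (es i) = vs i)

/-- A path with `n` edges, given by its (distinct) vertices and its edges. -/
def IsPathOn (n : ℕ) (vs : Fin (n + 1) → G.V) (es : Fin n → G.E) : Prop :=
  Function.Injective vs ∧
    ∀ i : Fin n,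
      (G.fst (es i) = vs i.castSucc ∧ G.snd (es i) = vs i.succ) ∨
      (G.fst (es i) = vs i.succ ∧ G.snd (es i) = vs i.castSucc)

/-- `p` is the characteristic vector of (the edge set of) a path from `s` to `t`. -/
def IsPathVec (s t : G.V) (p : G.E → ZMod 2) : Prop :=
  ∃ (n : ℕ) (vs : Fin (n + 1) → G.V) (es : Fin n → G.E),
    G.IsPathOn n vs es ∧ vs 0 = s ∧ vs (Fin.last n) = t ∧
      ∀ f : G.E, p f ≠ 0 ↔ ∃ i, es i = f

/-- Two edges lie in a common block: they are equal, or they lie on a common cycle. -/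
def BlockRel (e f : G.E) : Prop :=
  e = f ∨ ∃ (n : ℕ) (vs : Fin n → G.V) (es : Fin n → G.E),
    1 ≤ n ∧ G.IsCycleOn n vs es ∧ (∃ i, es i = e) ∧ (∃ j, es j = f)

/-- `T` is a spanning tree of `G` (as an edge set): the spanning subgraph with edge set `T`
is connected and has no cycles. -/
def IsSpanningTree (T : Set G.E) : Prop :=
  (G.edgeRestrict T).Connected ∧
    ∀ (n : ℕ) (vs : Fin n → (G.edgeRestrict T).V) (es : Fin n → (G.edgeRestrict T).E),
      (G.edgeRestrict T).IsCycleOn n vs es → n = 0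

/-- Contraction of the edge `e`: identify its two endpoints and delete `e`. -/
noncomputable def contract (e : G.E) : Multigraph where
  V := Quot (fun a b : G.V => a = G.fst e ∧ b = G.snd e)
  E := {f : G.E // f ≠ e}
  fintV := quotFintype _
  fintE := by classical exact inferInstance
  fst := fun f => Quot.mk _ (G.fst f.1)
  snd := fun f => Quot.mk _ (G.snd f.1)

/-- Addition of a (possibly parallel) edge joining `u` and `v`. -/
noncomputable def addEdge (u v : G.V) : Multigraph where
  V := G.V
  E := Option G.E
  fintV := G.fintV
  fintE := inferInstance
  fst := fun o => o.elim u G.fst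
  snd := fun o => o.elim v G.snd

/-- Subdivision of the edge `e`: delete `e` and add a new vertex (`none`) joined to both
endpoints of `e`. -/
noncomputable def subdivide (e : G.E) : Multigraph where
  V := Option G.V
  E := {f : G.E // f ≠ e} ⊕ Bool
  fintV := inferInstance
  fintE := by classical exact inferInstance
  fst := Sum.elim (fun f => some (G.fst f.1))
    (fun b => cond b (some (G.fst e)) (some (G.snd e)))
  snd := Sum.elim (fun f => some (G.snd f.1)) (fun _ => none)

/-- Replacement of the edge `e` of `G` by the graph `H` with terminals `s`, `t`:
delete `e`, take the disjoint union with `H`, and identify the endpoints of `e`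
with the terminals. -/
noncomputable def replaceEdge (e : G.E) (H : Multigraph) (s t : H.V) : Multigraph where
  V := Quot (fun a b : G.V ⊕ H.V =>
        (a = Sum.inl (G.fst e) ∧ b = Sum.inr s) ∨ (a = Sum.inl (G.snd e) ∧ b = Sum.inr t))
  E := {f : G.E // f ≠ e} ⊕ H.E
  fintV := quotFintype _
  fintE := by classical exact inferInstance
  fst := Sum.elim (fun f => Quot.mk _ (Sum.inl (G.fst f.1)))
    (fun f => Quot.mk _ (Sum.inr (H.fst f)))
  snd := Sum.elim (fun f => Quot.mk _ (Sum.inl (G.snd f.1)))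
    (fun f => Quot.mk _ (Sum.inr (H.snd f)))

/-! ### Combinatorial embeddings (rotation systems) and planarity -/

/-- Darts: each edge gives two darts. -/
def Dart : Type := G.E × Bool

noncomputable instance : Fintype G.Dart := inferInstanceAs (Fintype (G.E × Bool))

/-- The vertex at which a dart is based. -/
def dartVertex (d : G.Dart) : G.V := cond d.2 (G.fst d.1) (G.snd d.1)

/-- The involution exchanging the two darts of each edge. -/
def dartFlip : Equiv.Perm G.Dart where
  toFun d := (d.1, !d.2)
  invFun d := (d.1, !d.2)
  left_inv := fun d => by cases d; simp <;> rfl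
  right_inv := fun d => by cases d; simp <;> rfl

/-- `σ` is a rotation system: its orbits are exactly the sets of darts based at a
common vertex. -/
def IsRotation (σ : Equiv.Perm G.Dart) : Prop :=
  ∀ d d' : G.Dart, σ.SameCycle d d' ↔ G.dartVertex d = G.dartVertex d'

/-- The face permutation of a rotation system. -/
def facePerm (σ : Equiv.Perm G.Dart) : Equiv.Perm G.Dart := G.dartFlip.trans σ

/-- The faces of the embedding given by `σ`: orbits of the face permutation. -/
def Faces (σ : Equiv.Perm G.Dart) : Type := Quot (G.facePerm σ).SameCycle

/-- The face containing a given dart. -/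
def faceOf (σ : Equiv.Perm G.Dart) (d : G.Dart) : G.Faces σ := Quot.mk _ d

noncomputable def numFaces (σ : Equiv.Perm G.Dart) : ℕ := Nat.card (G.Faces σ)

noncomputable def numComponents : ℕ := Nat.card (Quot G.Adj)

/-- The number of connected components containing at least one edge. -/
noncomputable def numEdgedComponents : ℕ :=
  Nat.card {c : Quot G.Adj // ∃ e : G.E, Quot.mk G.Adj (G.fst e) = c}

/-- `σ` is a planar (genus zero) embedding, by Euler's formula
(componentwise `V - E + F = 2`, where components without edges contribute one global face). -/
def IsPlanarRotation (σ : Equiv.Perm G.Dart) : Prop :=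
  G.IsRotation σ ∧
    G.numFaces σ + Nat.card G.V = Nat.card G.E + G.numComponents + G.numEdgedComponents

/-- `G` is planar: it admits a genus-zero combinatorial embedding. -/
def IsPlanar : Prop := ∃ σ : Equiv.Perm G.Dart, G.IsPlanarRotation σ

/-- The boundary of a face, as an element of `F_2^E`: the edges having exactly one of
their two darts on the face. -/
noncomputable def faceBoundary (σ : Equiv.Perm G.Dart) (c : G.Faces σ) : G.E → ZMod 2 :=
  fun e => ∑ b : Bool, if G.faceOf σ (e, b) = c then 1 else 0

/-- The vertex `v` lies on the face `c`. -/
def VertexOnFace (σ : Equiv.Perm G.Dart) (v : G.V) (c : G.Faces σ) : Prop :=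
  ∃ d : G.Dart, G.faceOf σ d = c ∧ G.dartVertex d = v

/-- The edge `e` lies on the face `c`. -/
def EdgeOnFace (σ : Equiv.Perm G.Dart) (e : G.E) (c : G.Faces σ) : Prop :=
  ∃ b : Bool, G.faceOf σ (e, b) = c

end Multigraph
namespace Multigraph

variable (G : Multigraph)

lemma mem_cycleSpace_iff {x : G.E → ZMod 2} :
    x ∈ G.cycleSpace ↔ ∀ v, ∑ e : G.E, G.inc v e * x e = 0 := Iff.rfl

noncomputable def extFun (S : Set G.E) (x : (G.edgeRestrict S).E → ZMod 2) : G.E → ZMod 2 :=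
  fun e => if h : e ∈ S then x ⟨e, h⟩ else 0

noncomputable def extLin (S : Set G.E) :
    ((G.edgeRestrict S).E → ZMod 2) →ₗ[ZMod 2] (G.E → ZMod 2) where
  toFun := G.extFun S
  map_add' x y := funext fun e => by by_cases h : e ∈ S <;> simp [extFun, h] <;> rfl
  map_smul' c x := funext fun e => by by_cases h : e ∈ S <;> simp [extFun, h] <;> rfl

lemma sum_ext (S : Set G.E) (F : G.E → ZMod 2) (hF : ∀ e ∉ S, F e = 0) :
    ∑ e : G.E, F e = ∑ e : (G.edgeRestrict S).E, F e.1 := by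
  classical
  have h1 : ∑ e : G.E, F e = ∑ e ∈ S.toFinset, F e :=
    (Finset.sum_subset (Finset.subset_univ _) (fun x _ hx => hF x (by simpa using hx))).symm
  rw [h1]
  exact Finset.sum_subtype S.toFinset (fun x => Set.mem_toFinset) F

lemma inc_restrict (S : Set G.E) (v : G.V) (e : (G.edgeRestrict S).E) :
    (G.edgeRestrict S).inc v e = G.inc v e.1 := rfl

lemma extFun_mem (S : Set G.E) {x : (G.edgeRestrict S).E → ZMod 2}
    (hx : x ∈ (G.edgeRestrict S).cycleSpace) : G.extFun S x ∈ G.cycleSpace := by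
  intro v
  rw [G.sum_ext S _ (fun e he => by simp [extFun, he])]
  have h : ∀ e : (G.edgeRestrict S).E,
      G.inc v e.1 * G.extFun S x e.1 = (G.edgeRestrict S).inc v e * x e := by
    intro e
    simp only [extFun, dif_pos e.2]
    rfl
  rw [Finset.sum_congr rfl fun e _ => h e]
  exact hx v

lemma restrict_mem (S : Set G.E) {y : G.E → ZMod 2} (hy0 : ∀ e ∉ S, y e = 0)
    (hy : y ∈ G.cycleSpace) :
    (fun e : (G.edgeRestrict S).E => y e.1) ∈ (G.edgeRestrict S).cycleSpace ∧
      G.extFun S (fun e : (G.edgeRestrict S).E => y e.1) = y := by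
  constructor
  · intro v
    have := (G.sum_ext S (fun e => G.inc v e * y e)
      (fun e he => by show G.inc v e * y e = 0; rw [hy0 e he, mul_zero])).symm
    rw [show (∑ e : (G.edgeRestrict S).E, (G.edgeRestrict S).inc v e * y e.1)
        = ∑ e : (G.edgeRestrict S).E, G.inc v e.1 * y e.1 from rfl, this]
    exact hy v
  · funext e
    by_cases h : e ∈ S
    · simp only [extFun, dif_pos h]
    · simp only [extFun, dif_neg h]
      exact (hy0 e h).symm

lemma mem_span_image (S : Set G.E) {B : Finset ((G.edgeRestrict S).E → ZMod 2)}
    (hB : Submodule.span (ZMod 2) (B : Set _) = (G.edgeRestrict S).cycleSpace)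
    {y : G.E → ZMod 2} (hy0 : ∀ e ∉ S, y e = 0) (hy : y ∈ G.cycleSpace) :
    y ∈ Submodule.span (ZMod 2) ((B.image (G.extFun S) : Finset _) : Set _) := by
  obtain ⟨h1, h2⟩ := G.restrict_mem S hy0 hy
  have hmem : (fun e : (G.edgeRestrict S).E => y e.1) ∈ Submodule.span (ZMod 2) (B : Set _) := by
    rw [hB]; exact h1
  rw [show y = G.extLin S (fun e : (G.edgeRestrict S).E => y e.1) from h2.symm]
  rw [show ((B.image (G.extFun S) : Finset _) : Set _) = ⇑(G.extLin S) '' (B : Set _) from by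
    rw [Finset.coe_image]; rfl, ← Submodule.map_span]
  exact Submodule.mem_map_of_mem hmem

lemma exists_path (S : Set G.E) {a b : G.V}
    (h : Relation.ReflTransGen (G.edgeRestrict S).Adj a b) :
    ∃ p : G.E → ZMod 2, (∀ e ∉ S, p e = 0) ∧
      ∀ v, ∑ e : G.E, G.inc v e * p e
        = (if a = v then 1 else 0) + (if b = v then 1 else 0) := by
  have hz2 : ∀ z : ZMod 2, z + z = 0 := by decide
  induction h with
  | refl =>
      refine ⟨0, fun _ _ => rfl, fun v => ?_⟩
      have h0 : ∑ e : G.E, G.inc v e * (0 : G.E → ZMod 2) e = 0 := by simp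
      rw [h0]
      by_cases hav : a = v
      · simp only [if_pos hav]; decide
      · simp only [if_neg hav]; decide
  | @tail b c hab hbc ih =>
      obtain ⟨p, hp0, hpv⟩ := ih
      obtain ⟨f, hf⟩ := hbc
      set q : G.E → ZMod 2 := fun e => if e = f.1 then 1 else 0 with hq
      refine ⟨p + q, ?_, ?_⟩
      · intro e he
        have h1 : p e = 0 := hp0 e he
        have h2 : q e = 0 := by
          rw [hq]
          simp only
          rw [if_neg]
          intro h
          exact he (by rw [h]; exact f.2)
        show p e + q e = 0
        rw [h1, h2, add_zero]
      · intro v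
        have hterm : ∀ e : G.E, G.inc v e * (p + q) e
            = G.inc v e * p e + (if e = f.1 then G.inc v e else 0) := by
          intro e
          show G.inc v e * (p e + q e) = _
          by_cases he : e = f.1
          · rw [hq]; simp [he, mul_add]
          · rw [hq]; simp [he]
        rw [Finset.sum_congr rfl fun e _ => hterm e, Finset.sum_add_distrib,
          Finset.sum_ite_eq' Finset.univ f.1 (G.inc v), if_pos (Finset.mem_univ _), hpv v]
        rcases hf with ⟨h1, h2⟩ | ⟨h1, h2⟩
        · have hinc : G.inc v f.1 = (if b = v then 1 else 0) + (if c = v then 1 else 0) := by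
            simp only [inc]
            rw [show G.fst f.1 = b from h1, show G.snd f.1 = c from h2]
          rw [hinc]
          calc (if a = v then (1 : ZMod 2) else 0) + (if b = v then 1 else 0)
                + ((if b = v then 1 else 0) + (if c = v then 1 else 0))
              = (if a = v then 1 else 0) + (if c = v then 1 else 0)
                + ((if b = v then 1 else 0) + (if b = v then 1 else 0)) := by ring
            _ = (if a = v then 1 else 0) + (if c = v then 1 else 0) := by
                rw [hz2]; ring
        · have hinc : G.inc v f.1 = (if c = v then 1 else 0) + (if b = v then 1 else 0) := by
            simp only [inc]
            rw [show G.fst f.1 = c from h1, show G.snd f.1 = b from h2]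
          rw [hinc]
          calc (if a = v then (1 : ZMod 2) else 0) + (if b = v then 1 else 0)
                + ((if c = v then 1 else 0) + (if b = v then 1 else 0))
              = (if a = v then 1 else 0) + (if c = v then 1 else 0)
                + ((if b = v then 1 else 0) + (if b = v then 1 else 0)) := by ring
            _ = (if a = v then 1 else 0) + (if c = v then 1 else 0) := by
                rw [hz2]; ring

lemma exists_cycleBasis_subset (s : Set (G.E → ZMod 2))
    (hs : Submodule.span (ZMod 2) s = G.cycleSpace) :
    ∃ B : Finset (G.E → ZMod 2), G.IsCycleBasis B ∧ (B : Set (G.E → ZMod 2)) ⊆ s := by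
  obtain ⟨b, hbs, hspan, hind⟩ := exists_linearIndependent (ZMod 2) s
  have hfin : b.Finite := Set.toFinite b
  have hBc : (hfin.toFinset : Set (G.E → ZMod 2)) = b := hfin.coe_toFinset
  refine ⟨hfin.toFinset, ⟨?_, ?_, ?_⟩, ?_⟩
  · intro x hx
    have hxb : x ∈ s := hbs (hfin.mem_toFinset.mp hx)
    rw [← hs]
    exact Submodule.subset_span hxb
  · exact ((linearIndependent_subtype_iff.mp hind).mono hBc.subset).linearIndependent
  · rw [hBc, hspan, hs]
  · rw [hBc]; exact hbs

lemma basisNum_witness : ∃ B, G.IsKBasis G.basisNum B := by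
  have hne : {k | ∃ B, G.IsKBasis k B}.Nonempty := by
    obtain ⟨B, hB, -⟩ := G.exists_cycleBasis_subset (G.cycleSpace : Set _) (Submodule.span_eq _)
    exact ⟨B.card, B, hB, fun e => Finset.card_filter_le _ _⟩
  exact Nat.sInf_mem hne

end Multigraph

/-- Let `G` be a connected graph with subgraphs `G₁`, `G₂` (given by edge sets
`E₁`, `E₂`) such that `G = G₁ ∪ G₂` and `G₁ ∩ G₂` is a spanning connected subgraph of `G`.
Then `b(G) ≤ b(G₁) + b(G₂)`. -/
theorem basisNum_le_of_cover (G : Multigraph) (hG : G.Connected) (E₁ E₂ : Set G.E)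
    (hcover : E₁ ∪ E₂ = Set.univ)
    (hint : (G.edgeRestrict (E₁ ∩ E₂)).Connected) :
    G.basisNum ≤ (G.edgeRestrict E₁).basisNum + (G.edgeRestrict E₂).basisNum := by
  classical
  obtain ⟨B₁, hB₁⟩ := (G.edgeRestrict E₁).basisNum_witness
  obtain ⟨B₂, hB₂⟩ := (G.edgeRestrict E₂).basisNum_witness
  have hz2 : ∀ z : ZMod 2, z + z = 0 := by decide
  have hone : ∀ z : ZMod 2, z ≠ 0 → z = 1 := by decide
  set F₁ : Finset (G.E → ZMod 2) := B₁.image (G.extFun E₁) with hF₁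
  set F₂ : Finset (G.E → ZMod 2) := B₂.image (G.extFun E₂) with hF₂
  -- span of the union is the cycle space
  have hspan : Submodule.span (ZMod 2) ((F₁ ∪ F₂ : Finset _) : Set _) = G.cycleSpace := by
    apply le_antisymm
    · rw [Submodule.span_le]
      intro x hx
      rw [Finset.coe_union, Set.mem_union] at hx
      rcases hx with hx | hx
      · obtain ⟨z, hz, rfl⟩ := Finset.mem_image.mp hx
        exact G.extFun_mem E₁ (hB₁.1.1 z hz)
      · obtain ⟨z, hz, rfl⟩ := Finset.mem_image.mp hx
        exact G.extFun_mem E₂ (hB₂.1.1 z hz)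
    · intro x hx
      -- paths in the intersection
      have hex : ∀ e : G.E, ∃ p : G.E → ZMod 2, (∀ f ∉ E₁ ∩ E₂, p f = 0) ∧
          ∀ v, ∑ f : G.E, G.inc v f * p f
            = (if G.fst e = v then 1 else 0) + (if G.snd e = v then 1 else 0) :=
        fun e => G.exists_path (E₁ ∩ E₂) (hint.2 (G.fst e) (G.snd e))
      choose p hp0 hpv using hex
      set D : G.E → (G.E → ZMod 2) := fun e => (fun g => if g = e then 1 else 0) + p e with hD
      set U : Finset G.E := Finset.univ.filter (fun e => e ∉ E₁ ∧ x e ≠ 0) with hU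
      have hDcyc : ∀ e : G.E, D e ∈ G.cycleSpace := by
        intro e v
        have hterm : ∀ f : G.E, G.inc v f * D e f
            = (if f = e then G.inc v f else 0) + G.inc v f * p e f := by
          intro f
          show G.inc v f * ((if f = e then 1 else 0) + p e f) = _
          by_cases hf : f = e <;> simp [hf, mul_add]
        rw [Finset.sum_congr rfl fun f _ => hterm f, Finset.sum_add_distrib,
          Finset.sum_ite_eq' Finset.univ e (G.inc v), if_pos (Finset.mem_univ _), hpv e v]
        show ((if G.fst e = v then 1 else 0) + (if G.snd e = v then 1 else 0)) + _ = (0 : ZMod 2)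
        exact hz2 _
      have hDsupp : ∀ e : G.E, e ∈ U → ∀ f ∉ E₂, D e f = 0 := by
        intro e he f hf
        have he2 : e ∈ E₂ := by
          have hmem : e ∈ E₁ ∪ E₂ := by rw [hcover]; trivial
          rcases hmem with h | h
          · exact absurd h ((Finset.mem_filter.mp he).2.1)
          · exact h
        have hfe : f ≠ e := fun h => hf (h ▸ he2)
        show (if f = e then (1 : ZMod 2) else 0) + p e f = 0
        rw [if_neg hfe, zero_add]
        exact hp0 e f (fun h => hf h.2)
      have hDmem : ∀ e ∈ U, D e ∈ Submodule.span (ZMod 2) (F₂ : Set (G.E → ZMod 2)) := by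
        intro e he
        exact G.mem_span_image E₂ hB₂.1.2.2 (hDsupp e he) (hDcyc e)
      set y : G.E → ZMod 2 := x + ∑ e ∈ U, D e with hy
      have hycyc : y ∈ G.cycleSpace :=
        Submodule.add_mem _ hx (Submodule.sum_mem _ fun e _ => hDcyc e)
      have hysupp : ∀ f ∉ E₁, y f = 0 := by
        intro f hf
        have hstep : y f = x f + ∑ e ∈ U, (if f = e then (1 : ZMod 2) else 0) := by
          have hDf : ∀ e ∈ U, D e f = (if f = e then (1 : ZMod 2) else 0) := by
            intro e _
            show (if f = e then (1 : ZMod 2) else 0) + p e f = _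
            rw [hp0 e f (fun h => hf h.1), add_zero]
          show x f + (∑ e ∈ U, D e) f = _
          rw [Finset.sum_apply]
          rw [Finset.sum_congr rfl hDf]
        rw [hstep, Finset.sum_ite_eq U f (fun _ => (1 : ZMod 2))]
        by_cases hx0 : x f = 0
        · rw [if_neg, hx0, add_zero]
          intro hfu
          exact (Finset.mem_filter.mp hfu).2.2 hx0
        · rw [if_pos (Finset.mem_filter.mpr ⟨Finset.mem_univ _, hf, hx0⟩), hone _ hx0]
          decide
      have hymem : y ∈ Submodule.span (ZMod 2) (F₁ : Set (G.E → ZMod 2)) :=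
        G.mem_span_image E₁ hB₁.1.2.2 hysupp hycyc
      have hxy : x = y + ∑ e ∈ U, D e := by
        have hss : (∑ e ∈ U, D e) + ∑ e ∈ U, D e = 0 := funext fun g => hz2 _
        calc x = x + 0 := (add_zero x).symm
          _ = x + ((∑ e ∈ U, D e) + ∑ e ∈ U, D e) := by rw [hss]
          _ = y + ∑ e ∈ U, D e := by rw [hy, add_assoc]
      rw [hxy]
      have hsub1 : Submodule.span (ZMod 2) (F₁ : Set (G.E → ZMod 2))
          ≤ Submodule.span (ZMod 2) ((F₁ ∪ F₂ : Finset _) : Set _) :=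
        Submodule.span_mono (by rw [Finset.coe_union]; exact Set.subset_union_left)
      have hsub2 : Submodule.span (ZMod 2) (F₂ : Set (G.E → ZMod 2))
          ≤ Submodule.span (ZMod 2) ((F₁ ∪ F₂ : Finset _) : Set _) :=
        Submodule.span_mono (by rw [Finset.coe_union]; exact Set.subset_union_right)
      exact Submodule.add_mem _ (hsub1 hymem)
        (Submodule.sum_mem _ fun e he => hsub2 (hDmem e he))
  obtain ⟨B, hBbasis, hBsub⟩ := G.exists_cycleBasis_subset ((F₁ ∪ F₂ : Finset _) : Set _) hspan
  apply Nat.sInf_le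
  refine ⟨B, hBbasis, ?_⟩
  intro e
  have h1 : G.charge B e ≤ G.charge (F₁ ∪ F₂) e :=
    Finset.card_le_card (Finset.filter_subset_filter _ (Finset.coe_subset.mp hBsub))
  have h2 : G.charge (F₁ ∪ F₂) e ≤ G.charge F₁ e + G.charge F₂ e := by
    show ((F₁ ∪ F₂).filter _).card ≤ _
    rw [Finset.filter_union]
    exact Finset.card_union_le _ _
  have key : ∀ (S : Set G.E) (B' : Finset ((G.edgeRestrict S).E → ZMod 2)) (k : ℕ),
      (∀ e' : (G.edgeRestrict S).E, (G.edgeRestrict S).charge B' e' ≤ k) →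
      G.charge (B'.image (G.extFun S)) e ≤ k := by
    intro S B' k hk
    by_cases he : e ∈ S
    · calc G.charge (B'.image (G.extFun S)) e
          = ((B'.filter fun z => G.extFun S z e ≠ 0).image (G.extFun S)).card := by
            show ((B'.image (G.extFun S)).filter _).card = _
            rw [Finset.filter_image]
        _ ≤ (B'.filter fun z => G.extFun S z e ≠ 0).card := Finset.card_image_le
        _ = (G.edgeRestrict S).charge B' ⟨e, he⟩ := by
            show (B'.filter _).card = (B'.filter _).card
            congr 1
            apply Finset.filter_congr
            intro z _
            simp only [Multigraph.extFun, dif_pos he]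
        _ ≤ k := hk ⟨e, he⟩
    · have : G.charge (B'.image (G.extFun S)) e = 0 := by
        show ((B'.image (G.extFun S)).filter _).card = 0
        rw [Finset.card_eq_zero, Finset.filter_eq_empty_iff]
        intro z hz
        obtain ⟨w, _, rfl⟩ := Finset.mem_image.mp hz
        simp only [Multigraph.extFun, dif_neg he, ne_eq, not_not]
      omega
    -- done
  have h3 : G.charge F₁ e ≤ (G.edgeRestrict E₁).basisNum := key E₁ B₁ _ hB₁.2
  have h4 : G.charge F₂ e ≤ (G.edgeRestrict E₂).basisNum := key E₂ B₂ _ hB₂.2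
  omega
end
end

section
/- For every positive integer ℓ, there exists a graph G with maximum degree 3 and basis number b(G) ≥ ℓ. -/
open scoped Classical

noncomputable section

namespace Multigraph

variable (G : Multigraph)

/-- The incidence map as a linear map. -/
noncomputable def incMap : (G.E → ZMod 2) →ₗ[ZMod 2] (G.V → ZMod 2) where
  toFun x := fun v => ∑ e : G.E, G.inc v e * x e
  map_add' a b := by
    funext v
    simp only [Pi.add_apply]
    rw [← Finset.sum_add_distrib]
    exact Finset.sum_congr rfl fun e _ => by ring
  map_smul' c x := by
    funext v
    simp only [Pi.smul_apply, smul_eq_mul, RingHom.id_apply]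
    rw [Finset.mul_sum]
    exact Finset.sum_congr rfl fun e _ => by ring

lemma cycleSpace_eq_ker : G.cycleSpace = LinearMap.ker G.incMap := by
  ext x
  constructor
  · intro h
    exact LinearMap.mem_ker.2 (funext fun v => h v)
  · intro h v
    exact congrFun (LinearMap.mem_ker.1 h) v

lemma finrank_cycleSpace_ge :
    Fintype.card G.E - Fintype.card G.V ≤ Module.finrank (ZMod 2) G.cycleSpace := by
  rw [cycleSpace_eq_ker]
  have h := LinearMap.finrank_range_add_finrank_ker G.incMap
  have hdom : Module.finrank (ZMod 2) (G.E → ZMod 2) = Fintype.card G.E := by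
    simp [Module.finrank_fintype_fun_eq_card]
  have hcod : Module.finrank (ZMod 2) (LinearMap.range G.incMap) ≤ Fintype.card G.V := by
    have := Submodule.finrank_le (LinearMap.range G.incMap)
    simpa [Module.finrank_fintype_fun_eq_card] using this
  omega

/-- weight of a vector -/
noncomputable def wt (x : G.E → ZMod 2) : ℕ := (Finset.univ.filter fun e => x e ≠ 0).card

lemma sum_charge (B : Finset (G.E → ZMod 2)) :
    ∑ e : G.E, G.charge B e = ∑ x ∈ B, G.wt x := by
  unfold charge wt
  simp only [Finset.card_filter]
  exact Finset.sum_comm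

lemma exists_kbasis : ∃ k B, G.IsKBasis k B := by
  classical
  have : FiniteDimensional (ZMod 2) G.cycleSpace := inferInstance
  let b := Module.finBasis (ZMod 2) G.cycleSpace
  set n := Module.finrank (ZMod 2) G.cycleSpace
  let f : Fin n → (G.E → ZMod 2) := fun i => (b i : G.E → ZMod 2)
  have hfind : LinearIndependent (ZMod 2) f := by
    have := b.linearIndependent
    exact this.map' G.cycleSpace.subtype (Submodule.ker_subtype _)
  let B : Finset (G.E → ZMod 2) := Finset.image f Finset.univ
  have hBrange : (B : Set (G.E → ZMod 2)) = Set.range f := by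
    simp [B]
  refine ⟨B.card, B, ⟨⟨?_, ?_, ?_⟩, ?_⟩⟩
  · intro x hx
    simp only [B, Finset.mem_image] at hx
    obtain ⟨i, _, rfl⟩ := hx
    exact (b i).2
  · have h1 : LinearIndependent (ZMod 2) ((↑) : Set.range f → (G.E → ZMod 2)) :=
      (linearIndepOn_id_range_iff hfind.injective).2 hfind
    have h2 : LinearIndependent (ZMod 2) (fun x : (B : Set (G.E → ZMod 2)) =>
        (x : G.E → ZMod 2)) := by
      rw [hBrange]; exact h1
    exact h2
  · rw [hBrange]
    have : Set.range f = G.cycleSpace.subtype '' Set.range b := by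
      rw [← Set.range_comp]; rfl
    rw [this, Submodule.span_image, b.span_eq, Submodule.map_subtype_top]
  · intro e
    exact (Finset.card_filter_le _ _)

lemma ne_zero_of_mem_basis {B : Finset (G.E → ZMod 2)} (hB : G.IsCycleBasis B)
    {x : G.E → ZMod 2} (hx : x ∈ B) : x ≠ 0 := by
  have := hB.2.1
  exact this.ne_zero ⟨x, hx⟩

lemma card_basis_ge {B : Finset (G.E → ZMod 2)} (hB : G.IsCycleBasis B) :
    Module.finrank (ZMod 2) G.cycleSpace ≤ B.card := by
  have hspan := hB.2.2
  have := finrank_span_le_card (R := ZMod 2) (B : Set (G.E → ZMod 2))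
  rw [hspan] at this
  simpa using this

theorem le_basisNum (ℓ w : ℕ) (hE : 0 < Fintype.card G.E)
    (hw : ∀ x : G.E → ZMod 2, x ∈ G.cycleSpace → x ≠ 0 → w ≤ G.wt x)
    (hcount : ℓ * Fintype.card G.E ≤ (Fintype.card G.E - Fintype.card G.V) * w) :
    ℓ ≤ G.basisNum := by
  have hkey : ∀ k ∈ {k | ∃ B, G.IsKBasis k B}, ℓ ≤ k := by
    rintro k ⟨B, ⟨hCB, hch⟩⟩
    have hwt : ∀ x ∈ B, w ≤ G.wt x := fun x hx =>
      hw x (hCB.1 x hx) (G.ne_zero_of_mem_basis hCB hx)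
    have h1 : B.card * w ≤ ∑ x ∈ B, G.wt x := by
      calc B.card * w = ∑ _x ∈ B, w := by rw [Finset.sum_const, smul_eq_mul]
        _ ≤ ∑ x ∈ B, G.wt x := Finset.sum_le_sum hwt
    have h2 : ∑ e : G.E, G.charge B e ≤ Fintype.card G.E * k := by
      calc ∑ e : G.E, G.charge B e ≤ ∑ _e : G.E, k := Finset.sum_le_sum fun e _ => hch e
        _ = Fintype.card G.E * k := by rw [Finset.sum_const, smul_eq_mul]; simp
    have h3 := G.sum_charge B
    have h4 : Module.finrank (ZMod 2) G.cycleSpace ≤ B.card := G.card_basis_ge hCB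
    have h5 := G.finrank_cycleSpace_ge
    have : ℓ * Fintype.card G.E ≤ k * Fintype.card G.E := by
      calc ℓ * Fintype.card G.E ≤ (Fintype.card G.E - Fintype.card G.V) * w := hcount
        _ ≤ B.card * w := Nat.mul_le_mul_right w (le_trans h5 h4)
        _ ≤ ∑ x ∈ B, G.wt x := h1
        _ = ∑ e : G.E, G.charge B e := h3.symm
        _ ≤ Fintype.card G.E * k := h2
        _ = k * Fintype.card G.E := Nat.mul_comm _ _
    exact Nat.le_of_mul_le_mul_right this hE
  have hne : {k | ∃ B, G.IsKBasis k B}.Nonempty := by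
    obtain ⟨k, B, h⟩ := G.exists_kbasis
    exact ⟨k, B, h⟩
  exact hkey _ (Nat.sInf_mem hne)

end Multigraph

namespace Schm

def sg (s : Bool) : ℤ := if s then 1 else -1

lemma sg_cases (s : Bool) : sg s = 1 ∨ sg s = -1 := by cases s <;> simp [sg]

def movZ (i : Fin 3) (s : Bool) (v : ℤ × ℤ) : ℤ × ℤ :=
  if i = 1 then (v.1 + 2 * sg s * v.2, v.2)
  else if i = 2 then (v.1, v.2 + 2 * sg s * v.1)
  else v

def evalZ : List (Fin 3) → Bool → ℤ × ℤ → ℤ × ℤ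
  | [], _, v => v
  | a :: t, s, v => evalZ t (!s) (movZ a s v)

def StA (s : Bool) (v : ℤ × ℤ) : Prop :=
  1 ≤ v.2 ^ 2 ∧ v.2 ^ 2 < v.1 ^ 2 ∧ 0 ≤ sg s * v.1 * v.2

def StB (s : Bool) (v : ℤ × ℤ) : Prop :=
  1 ≤ v.1 ^ 2 ∧ v.1 ^ 2 < v.2 ^ 2 ∧ 0 ≤ sg s * v.1 * v.2

def St (i : Fin 3) (s : Bool) (v : ℤ × ℤ) : Prop :=
  (i = 1 ∧ StA s v) ∨ (i = 2 ∧ StB s v)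

-- core arithmetic
lemma coreBA (s σ : Bool) (x y : ℤ) (h : StB σ (x, y)) : StA s (x + 2 * sg s * y, y) := by
  obtain ⟨h1, h2, _⟩ := h
  simp only [StA, StB] at h1 h2 ⊢
  rcases sg_cases s with hd | hd <;> rw [hd] <;>
    exact ⟨by nlinarith [sq_nonneg (x + y), sq_nonneg (x - y)],
      by nlinarith [sq_nonneg (x + y), sq_nonneg (x - y)],
      by nlinarith [sq_nonneg (x + y), sq_nonneg (x - y)]⟩

lemma coreAA (s : Bool) (x y : ℤ) (h : StA s (x, y)) : StA s (x + 2 * sg s * y, y) := by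
  obtain ⟨h1, h2, h3⟩ := h
  simp only [StA] at h1 h2 h3 ⊢
  rcases sg_cases s with hd | hd <;> rw [hd] at h3 ⊢ <;>
    exact ⟨by nlinarith, by nlinarith, by nlinarith⟩

lemma coreAB (s σ : Bool) (x y : ℤ) (h : StA σ (x, y)) : StB s (x, y + 2 * sg s * x) := by
  obtain ⟨h1, h2, _⟩ := h
  simp only [StA, StB] at h1 h2 ⊢
  rcases sg_cases s with hd | hd <;> rw [hd] <;>
    exact ⟨by nlinarith [sq_nonneg (x + y), sq_nonneg (x - y)],
      by nlinarith [sq_nonneg (x + y), sq_nonneg (x - y)],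
      by nlinarith [sq_nonneg (x + y), sq_nonneg (x - y)]⟩

lemma coreBB (s : Bool) (x y : ℤ) (h : StB s (x, y)) : StB s (x, y + 2 * sg s * x) := by
  obtain ⟨h1, h2, h3⟩ := h
  simp only [StB] at h1 h2 h3 ⊢
  rcases sg_cases s with hd | hd <;> rw [hd] at h3 ⊢ <;>
    exact ⟨by nlinarith, by nlinarith, by nlinarith⟩

lemma Tmain {j : Fin 3} {σ : Bool} {v : ℤ × ℤ} (h : St j σ v) (i : Fin 3) (s : Bool)
    (hi : i ≠ 0) (hcompat : i ≠ j ∨ σ = s) : St i s (movZ i s v) := by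
  obtain ⟨x, y⟩ := v
  have hi12 : i = 1 ∨ i = 2 := by omega
  rcases h with ⟨hj, hA⟩ | ⟨hj, hB⟩ <;> rcases hi12 with hi1 | hi2 <;> subst hj
  · -- j = 1 (StA), i = 1 : need σ = s
    have hσ : σ = s := by
      rcases hcompat with h | h
      · exact absurd hi1 h
      · exact h
    subst hσ; subst hi1
    exact Or.inl ⟨rfl, by simpa [movZ] using coreAA σ x y hA⟩
  · subst hi2
    exact Or.inr ⟨rfl, by simpa [movZ] using coreAB s σ x y hA⟩
  · subst hi1
    exact Or.inl ⟨rfl, by simpa [movZ] using coreBA s σ x y hB⟩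
  · have hσ : σ = s := by
      rcases hcompat with h | h
      · exact absurd hi2 h
      · exact h
    subst hσ; subst hi2
    exact Or.inr ⟨rfl, by simpa [movZ] using coreBB σ x y hB⟩

def pick (i : Fin 3) : ℤ × ℤ := if i = 1 then (0, 1) else (1, 0)

lemma baseSt (i : Fin 3) (s : Bool) (hi : i ≠ 0) : St i s (movZ i s (pick i)) := by
  have hi12 : i = 1 ∨ i = 2 := by omega
  rcases hi12 with h | h <;> subst h <;> cases s <;>
    simp [St, StA, StB, movZ, pick, sg] <;> norm_num

theorem ind : ∀ (l : List (Fin 3)) (s : Bool) (last : Fin 3) (v : ℤ × ℤ),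
    List.Chain' (· ≠ ·) (last :: l) →
    (if last = 0 then ∃ j, j ≠ 0 ∧ St j s v else St last (!s) v) →
    ∃ j σ, St j σ (evalZ l s v)
  | [], s, last, v, _, h => by
      by_cases h0 : last = 0
      · rw [if_pos h0] at h; obtain ⟨j, _, hj⟩ := h; exact ⟨j, s, hj⟩
      · rw [if_neg h0] at h; exact ⟨last, !s, h⟩
  | a :: t, s, last, v, hc, h => by
      have hla : last ≠ a := (List.isChain_cons_cons.1 hc).1
      have hct : List.Chain' (· ≠ ·) (a :: t) := (List.isChain_cons_cons.1 hc).2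
      show ∃ j σ, St j σ (evalZ t (!s) (movZ a s v))
      by_cases ha : a = 0
      · have hl0 : last ≠ 0 := fun hh => hla (hh.trans ha.symm)
        rw [if_neg hl0] at h
        subst ha
        have hmv : movZ 0 s v = v := by simp [movZ]
        rw [hmv]
        exact ind t (!s) 0 v hct (by rw [if_pos rfl]; exact ⟨last, hl0, h⟩)
      · have hSt : St a s (movZ a s v) := by
          by_cases h0 : last = 0
          · rw [if_pos h0] at h
            obtain ⟨j, hj0, hj⟩ := h
            exact Tmain hj a s ha (Or.inr rfl)
          · rw [if_neg h0] at h
            exact Tmain h a s ha (Or.inl (Ne.symm hla))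
        exact ind t (!s) a (movZ a s v) hct (by rw [if_neg ha]; simpa using hSt)

theorem start (a b : Fin 3) (t : List (Fin 3)) (s : Bool)
    (hc : List.Chain' (· ≠ ·) (a :: b :: t)) :
    ∃ j σ, St j σ (evalZ (a :: b :: t) s (pick (if a = 0 then b else a))) := by
  have hab : a ≠ b := (List.isChain_cons_cons.1 hc).1
  have hct : List.Chain' (· ≠ ·) (b :: t) := (List.isChain_cons_cons.1 hc).2
  by_cases ha : a = 0
  · rw [if_pos ha]
    subst ha
    have hb : b ≠ 0 := Ne.symm hab
    show ∃ j σ, St j σ (evalZ (b :: t) (!s) (movZ 0 s (pick b)))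
    have hmv : movZ 0 s (pick b) = pick b := by simp [movZ]
    rw [hmv]
    show ∃ j σ, St j σ (evalZ t (!!s) (movZ b (!s) (pick b)))
    exact ind t (!!s) b _ hct (by rw [if_neg hb]; simpa using baseSt b (!s) hb)
  · rw [if_neg ha]
    show ∃ j σ, St j σ (evalZ (b :: t) (!s) (movZ a s (pick a)))
    exact ind (b :: t) (!s) a _ hc (by rw [if_neg ha]; simpa using baseSt a s ha)

lemma St_ne {j : Fin 3} {σ : Bool} {v : ℤ × ℤ} (h : St j σ v) : v.1 ≠ 0 ∧ v.2 ≠ 0 := by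
  rcases h with ⟨_, h1, h2, _⟩ | ⟨_, h1, h2, _⟩ <;>
    constructor <;> intro h0 <;>
    nlinarith [sq_nonneg v.1, sq_nonneg v.2, h0, h1, h2]

lemma movZ_bound (a : Fin 3) (s : Bool) (v : ℤ × ℤ) (k : ℕ)
    (h1 : |v.1| ≤ 3 ^ k) (h2 : |v.2| ≤ 3 ^ k) :
    |(movZ a s v).1| ≤ 3 ^ (k + 1) ∧ |(movZ a s v).2| ≤ 3 ^ (k + 1) := by
  have hsg : |(2 : ℤ) * sg s| = 2 := by cases s <;> simp [sg]
  have hpow : (3 : ℤ) ^ (k + 1) = 3 ^ k + 2 * 3 ^ k := by ring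
  have hm : ∀ x y : ℤ, |x| ≤ 3 ^ k → |y| ≤ 3 ^ k → |x + 2 * sg s * y| ≤ 3 ^ (k + 1) := by
    intro x y hx hy
    calc |x + 2 * sg s * y| ≤ |x| + |2 * sg s * y| := abs_add_le _ _
      _ = |x| + 2 * |y| := by rw [abs_mul, hsg]
      _ ≤ 3 ^ k + 2 * 3 ^ k := by linarith
      _ = 3 ^ (k + 1) := hpow.symm
  have hmono : ∀ x : ℤ, |x| ≤ 3 ^ k → |x| ≤ 3 ^ (k + 1) := by
    intro x hx
    have : (0 : ℤ) ≤ 3 ^ k := by positivity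
    rw [hpow]; linarith
  fin_cases a <;> simp only [movZ] <;> norm_num <;>
    exact ⟨by first | exact hm _ _ h1 h2 | exact hmono _ h1,
      by first | exact hm _ _ h2 h1 | exact hmono _ h2⟩

lemma evalZ_bound : ∀ (l : List (Fin 3)) (s : Bool) (v : ℤ × ℤ) (k : ℕ),
    |v.1| ≤ 3 ^ k → |v.2| ≤ 3 ^ k →
    |(evalZ l s v).1| ≤ 3 ^ (k + l.length) ∧ |(evalZ l s v).2| ≤ 3 ^ (k + l.length)
  | [], s, v, k, h1, h2 => by simpa using ⟨h1, h2⟩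
  | a :: t, s, v, k, h1, h2 => by
      obtain ⟨g1, g2⟩ := movZ_bound a s v k h1 h2
      have := evalZ_bound t (!s) (movZ a s v) (k + 1) g1 g2
      have harith : k + 1 + t.length = k + (a :: t).length := by
        simp [List.length_cons]; omega
      rw [harith] at this
      exact this





open Matrix

def n₀ (ℓ : ℕ) : ℕ := 3 ^ (6 * ℓ) + 2

instance (ℓ : ℕ) : NeZero (n₀ ℓ) := ⟨by
  have : 0 < 3 ^ (6 * ℓ) := Nat.pow_pos (by norm_num)
  unfold n₀; omega⟩

abbrev R (ℓ : ℕ) := ZMod (n₀ ℓ)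
abbrev M2 (ℓ : ℕ) := Matrix (Fin 2) (Fin 2) (R ℓ)
abbrev Γ (ℓ : ℕ) := (M2 ℓ)ˣ

noncomputable def aU (ℓ : ℕ) : Γ ℓ :=
  ⟨!![1, 2; 0, 1], !![1, -2; 0, 1], by
    ext i j; fin_cases i <;> fin_cases j <;>
      simp [Matrix.mul_apply, Fin.sum_univ_two], by
    ext i j; fin_cases i <;> fin_cases j <;>
      simp [Matrix.mul_apply, Fin.sum_univ_two]⟩

noncomputable def bU (ℓ : ℕ) : Γ ℓ :=
  ⟨!![1, 0; 2, 1], !![1, 0; -2, 1], by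
    ext i j; fin_cases i <;> fin_cases j <;>
      simp [Matrix.mul_apply, Fin.sum_univ_two], by
    ext i j; fin_cases i <;> fin_cases j <;>
      simp [Matrix.mul_apply, Fin.sum_univ_two]⟩

noncomputable def α (ℓ : ℕ) : Fin 3 → Γ ℓ := ![1, aU ℓ, bU ℓ]

/-- action of a matrix on a pair -/
def act {ℓ : ℕ} (M : M2 ℓ) (v : R ℓ × R ℓ) : R ℓ × R ℓ :=
  (M 0 0 * v.1 + M 0 1 * v.2, M 1 0 * v.1 + M 1 1 * v.2)

lemma act_one {ℓ : ℕ} (v : R ℓ × R ℓ) : act (1 : M2 ℓ) v = v := by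
  simp [act, Matrix.one_apply]

lemma act_mul {ℓ : ℕ} (M N : M2 ℓ) (v : R ℓ × R ℓ) :
    act (M * N) v = act M (act N v) := by
  unfold act
  ext <;> simp [Matrix.mul_apply, Fin.sum_univ_two] <;> ring

def sgR (ℓ : ℕ) (s : Bool) : R ℓ := if s then 1 else -1

def movP {ℓ : ℕ} (i : Fin 3) (s : Bool) (v : R ℓ × R ℓ) : R ℓ × R ℓ :=
  if i = 1 then (v.1 + 2 * sgR ℓ s * v.2, v.2)
  else if i = 2 then (v.1, v.2 + 2 * sgR ℓ s * v.1) else v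

def evalP {ℓ : ℕ} : List (Fin 3) → Bool → R ℓ × R ℓ → R ℓ × R ℓ
  | [], _, v => v
  | a :: t, s, v => evalP t (!s) (movP a s v)

def castP (ℓ : ℕ) (v : ℤ × ℤ) : R ℓ × R ℓ := ((v.1 : R ℓ), (v.2 : R ℓ))

lemma cast_movZ (ℓ : ℕ) (i : Fin 3) (s : Bool) (v : ℤ × ℤ) :
    castP ℓ (movZ i s v) = movP i s (castP ℓ v) := by
  fin_cases i <;> cases s <;> simp [castP, movZ, movP, sg, sgR] <;> push_cast <;> ring_nf <;> rfl

lemma cast_evalZ (ℓ : ℕ) : ∀ (l : List (Fin 3)) (s : Bool) (v : ℤ × ℤ),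
    castP ℓ (evalZ l s v) = evalP l s (castP ℓ v)
  | [], _, _ => rfl
  | a :: t, s, v => by
      show castP ℓ (evalZ t (!s) (movZ a s v)) = evalP t (!s) (movP a s (castP ℓ v))
      rw [cast_evalZ ℓ t (!s) (movZ a s v), cast_movZ]

lemma act_gen (ℓ : ℕ) (i : Fin 3) (s : Bool) (v : R ℓ × R ℓ) :
    act ((if s then α ℓ i else (α ℓ i)⁻¹) : Γ ℓ).val v = movP i s v := by
  fin_cases i <;> cases s <;>
    simp [α, aU, bU, act, movP, sgR, Units.inv_mk, act_one] <;> ring_nf <;>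
    try rfl

/-- the voltage graph -/
noncomputable def Gp (ℓ : ℕ) : Multigraph where
  V := Bool × Γ ℓ
  E := Fin 3 × Γ ℓ
  fintV := by infer_instance
  fintE := by infer_instance
  fst e := (false, e.2)
  snd e := (true, e.2 * α ℓ e.1)

lemma Gp_sum (ℓ : ℕ) {M : Type} [AddCommMonoid M] (f : Fin 3 × Γ ℓ → M) :
    (∑ e : (Gp ℓ).E, f e) = ∑ i : Fin 3, ∑ g : Γ ℓ, f (i, g) := by
  rw [show (∑ e : (Gp ℓ).E, f e) = ∑ e : Fin 3 × Γ ℓ, f e from rfl, Fintype.sum_prod_type]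

lemma Gp_fst (ℓ : ℕ) : (Gp ℓ).fst = fun e : Fin 3 × Γ ℓ => ((false : Bool), e.2) := rfl

lemma Gp_snd (ℓ : ℕ) :
    (Gp ℓ).snd = fun e : Fin 3 × Γ ℓ => ((true : Bool), e.2 * α ℓ e.1) := rfl

lemma vmk (ℓ : ℕ) (b c : Bool) (δ γ : Γ ℓ) :
    @Eq ((Gp ℓ).V) (b, δ) (c, γ) ↔ (b = c ∧ δ = γ) := by
  constructor
  · intro h
    exact Prod.ext_iff.mp (show ((b, δ) : Bool × Γ ℓ) = (c, γ) from h)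
  · rintro ⟨rfl, rfl⟩; rfl

lemma Gp_degree (ℓ : ℕ) (v : (Gp ℓ).V) : (Gp ℓ).degree v = 3 := by
  obtain ⟨b, γ⟩ := v
  unfold Multigraph.degree
  erw [Gp_sum ℓ]
  have hiff : ∀ (i : Fin 3) (δ : Γ ℓ), (δ * α ℓ i = γ) ↔ (δ = γ * (α ℓ i)⁻¹) := by
    intro i δ
    constructor
    · intro h; rw [← h, mul_inv_cancel_right]
    · intro h; rw [h, inv_mul_cancel_right]
  cases b
  · simp [Gp_fst, Gp_snd, vmk, Finset.sum_ite_eq']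
  · simp [Gp_fst, Gp_snd, vmk, hiff, Finset.sum_ite_eq']

lemma Gp_eqF (ℓ : ℕ) (x : (Gp ℓ).E → ZMod 2) (hx : x ∈ (Gp ℓ).cycleSpace) (γ : Γ ℓ) :
    x (0, γ) + x (1, γ) + x (2, γ) = 0 := by
  have h := hx ((false, γ) : (Gp ℓ).V)
  unfold Multigraph.inc at h
  erw [Gp_sum ℓ] at h
  simp only [Gp_fst, Gp_snd, vmk, and_true, and_false, false_and, true_and, if_false,
    if_true, ite_mul, one_mul, zero_mul, add_zero, zero_add,
    Bool.true_eq_false, Bool.false_eq_true, iff_false, if_neg, eq_self_iff_true] at h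
  rw [Finset.sum_congr rfl
    (fun i _ => Finset.sum_ite_eq' Finset.univ γ (fun δ => x (i, δ)))] at h
  simpa [Fin.sum_univ_three] using h

lemma Gp_eqT (ℓ : ℕ) (x : (Gp ℓ).E → ZMod 2) (hx : x ∈ (Gp ℓ).cycleSpace) (γ : Γ ℓ) :
    x (0, γ * (α ℓ 0)⁻¹) + x (1, γ * (α ℓ 1)⁻¹) + x (2, γ * (α ℓ 2)⁻¹) = 0 := by
  have h := hx ((true, γ) : (Gp ℓ).V)
  unfold Multigraph.inc at h
  erw [Gp_sum ℓ] at h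
  have hiff : ∀ (i : Fin 3) (δ : Γ ℓ), (δ * α ℓ i = γ) ↔ (δ = γ * (α ℓ i)⁻¹) := by
    intro i δ
    constructor
    · intro h; rw [← h, mul_inv_cancel_right]
    · intro h; rw [h, inv_mul_cancel_right]
  simp only [Gp_fst, Gp_snd, vmk, and_true, and_false, false_and, true_and, if_false,
    if_true, ite_mul, one_mul, zero_mul, add_zero, zero_add, hiff,
    Bool.true_eq_false, Bool.false_eq_true, iff_false, if_neg, eq_self_iff_true] at h
  rw [Finset.sum_congr rfl
    (fun i _ => Finset.sum_ite_eq' Finset.univ (γ * (α ℓ i)⁻¹) (fun δ => x (i, δ)))] at h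
  simpa [Fin.sum_univ_three] using h

lemma third (f : Fin 3 → ZMod 2) (h : f 0 + f 1 + f 2 = 0) (i : Fin 3) (hi : f i ≠ 0) :
    ∃ j, j ≠ i ∧ f j ≠ 0 := by
  by_contra hc
  push_neg at hc
  fin_cases i
  · rw [hc 1 (by decide), hc 2 (by decide), add_zero, add_zero] at h; exact hi h
  · rw [hc 0 (by decide), hc 2 (by decide), zero_add, add_zero] at h; exact hi h
  · rw [hc 0 (by decide), hc 1 (by decide), zero_add, zero_add] at h; exact hi h

lemma pick_coord (c : Fin 3) : (pick c).1 = 0 ∨ (pick c).2 = 0 := by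
  unfold pick; split <;> simp

lemma pick_bound (c : Fin 3) : |(pick c).1| ≤ 3 ^ 0 ∧ |(pick c).2| ≤ 3 ^ 0 := by
  unfold pick; split <;> norm_num

set_option maxHeartbeats 1000000 in
lemma Gp_minwt (ℓ : ℕ) (x : (Gp ℓ).E → ZMod 2) (hx : x ∈ (Gp ℓ).cycleSpace)
    (hx0 : x ≠ 0) : 3 * ℓ ≤ (Gp ℓ).wt x := by
  by_contra hcon
  push_neg at hcon
  -- up/down step existence
  have hup : ∀ (i : Fin 3) (γ : Γ ℓ), x (i, γ) ≠ 0 → ∃ j, j ≠ i ∧ x (j, γ) ≠ 0 := by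
    intro i γ hi
    exact third (fun j => x (j, γ)) (Gp_eqF ℓ x hx γ) i hi
  have hdown : ∀ (i : Fin 3) (γ : Γ ℓ), x (i, γ) ≠ 0 →
      ∃ j, j ≠ i ∧ x (j, γ * α ℓ i * (α ℓ j)⁻¹) ≠ 0 := by
    intro i γ hi
    have h3 := Gp_eqT ℓ x hx (γ * α ℓ i)
    have hfi : x (i, γ * α ℓ i * (α ℓ i)⁻¹) ≠ 0 := by rwa [mul_inv_cancel_right]
    exact third (fun j => x (j, γ * α ℓ i * (α ℓ j)⁻¹)) h3 i hfi
  -- the subtype of edges in the support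
  let T := {e : Fin 3 × Γ ℓ // x e ≠ 0}
  haveI : Fintype T := Fintype.ofFinite T
  have hgT : ∀ u : T, ∃ (wv : T) (jj : Fin 3), jj ≠ u.1.1 ∧ wv.1.1 ≠ jj ∧
      wv.1.2 = u.1.2 * α ℓ u.1.1 * (α ℓ jj)⁻¹ := by
    rintro ⟨⟨i, γ⟩, he⟩
    obtain ⟨j, hj, hxj⟩ := hdown i γ he
    obtain ⟨i', hi', hxi'⟩ := hup j (γ * α ℓ i * (α ℓ j)⁻¹) hxj
    exact ⟨⟨(i', γ * α ℓ i * (α ℓ j)⁻¹), hxi'⟩, j, hj, hi', rfl⟩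
  choose g jf hj1 hj2 hj3 using hgT
  -- the support is nonempty
  have hx0' : ∃ e : Fin 3 × Γ ℓ, x e ≠ 0 := by
    by_contra hz
    push_neg at hz
    exact hx0 (funext fun e => hz e)
  obtain ⟨e₀, he₀⟩ := hx0'
  let u₀ : T := ⟨e₀, he₀⟩
  -- card T = wt x
  have hcardT : Fintype.card T = (Gp ℓ).wt x := by
    classical
    unfold Multigraph.wt
    have h1 : Fintype.card T = @Fintype.card T (Subtype.fintype _) :=
      congrArg (fun i => @Fintype.card T i) (Subsingleton.elim _ _)
    convert Fintype.card_subtype (α := (Gp ℓ).E) (fun e => x e ≠ 0)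
    rfl
  -- the key contradiction
  have key : ∀ s t : ℕ, s < t → t ≤ Fintype.card T → g^[s] u₀ = g^[t] u₀ → False := by
    intro s t hst hle hiter
    set m := t - s with hm
    have hm1 : 1 ≤ m := by omega
    set w : ℕ → T := fun k => g^[k] (g^[s] u₀) with hwdef
    have hw0 : w m = w 0 := by
      show g^[m] (g^[s] u₀) = g^[0] (g^[s] u₀)
      rw [← Function.iterate_add_apply, show m + s = t from by omega]
      exact hiter.symm
    have hwsucc : ∀ k, w (k + 1) = g (w k) := by
      intro k
      show g^[k + 1] (g^[s] u₀) = g (g^[k] (g^[s] u₀))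
      rw [Function.iterate_succ_apply']
    -- sequences
    set I : ℕ → Fin 3 := fun k => (w k).1.1 with hI
    set Gm : ℕ → Γ ℓ := fun k => (w k).1.2 with hGmdef
    set J : ℕ → Fin 3 := fun k => jf (w k) with hJ
    have hJI : ∀ k, J k ≠ I k := fun k => hj1 (w k)
    have hIJ : ∀ k, I (k + 1) ≠ J k := fun k => by
      show (w (k + 1)).1.1 ≠ jf (w k)
      rw [hwsucc]; exact hj2 (w k)
    have hGm : ∀ k, Gm (k + 1) = Gm k * α ℓ (I k) * (α ℓ (J k))⁻¹ := fun k => by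
      show (w (k + 1)).1.2 = (w k).1.2 * α ℓ (w k).1.1 * (α ℓ (jf (w k)))⁻¹
      rw [hwsucc]; exact hj3 (w k)
    -- the voltage products
    set prd : ℕ → Γ ℓ :=
      fun k => ((List.range k).map (fun r => α ℓ (I r) * (α ℓ (J r))⁻¹)).prod with hprd
    have hprd0 : prd 0 = 1 := rfl
    have hprdsucc : ∀ k, prd (k + 1) = prd k * (α ℓ (I k) * (α ℓ (J k))⁻¹) := by
      intro k
      show ((List.range (k+1)).map _).prod = _
      rw [List.range_succ, List.map_append, List.prod_append]
      simp
      rfl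
    have hGmp : ∀ k, Gm k = Gm 0 * prd k := by
      intro k
      induction k with
      | zero => rw [hprd0, mul_one]
      | succ k ih =>
          rw [hGm k, ih, hprdsucc k]
          simp [mul_assoc]
    have hclose : prd m = 1 := by
      have h1 : Gm m = Gm 0 := by rw [hGmdef]; exact congrArg (fun u : T => u.1.2) hw0
      have h2 := hGmp m
      rw [h1] at h2
      have := h2.symm
      rwa [mul_eq_left] at this
    -- the letter list
    set L : ℕ → List (Fin 3) :=
      fun k => Nat.rec [] (fun r acc => J r :: I r :: acc) k with hLdef
    have hLsucc : ∀ k, L (k + 1) = J k :: I k :: L k := fun k => rfl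
    have hlen : ∀ k, (L k).length = 2 * k := by
      intro k
      induction k with
      | zero => rfl
      | succ k ih => rw [hLsucc]; simp [ih]; omega
    have hchain : ∀ k, List.Chain' (· ≠ ·) (I k :: L k) := by
      intro k
      induction k with
      | zero => exact List.isChain_singleton _
      | succ k ih =>
          rw [hLsucc]
          exact List.isChain_cons_cons.2 ⟨hIJ k, List.isChain_cons_cons.2 ⟨hJI k, ih⟩⟩
    -- evalP correspondence
    have hevalP : ∀ k (v : R ℓ × R ℓ), evalP (L k) false v = act (prd k).val v := by
      intro k
      induction k with
      | zero => intro v; rw [hprd0]; show v = act (1 : Γ ℓ).val v; rw [Units.val_one, act_one]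
      | succ k ih =>
          intro v
          rw [hLsucc]
          show evalP (L k) false (movP (I k) true (movP (J k) false v)) = _
          have e1 : movP (J k) false v = act ((α ℓ (J k))⁻¹).val v := by
            rw [← act_gen ℓ (J k) false v]; norm_num
          have e2 : ∀ u, movP (I k) true u = act (α ℓ (I k)).val u := by
            intro u; rw [← act_gen ℓ (I k) true u]; norm_num
          rw [e1, e2, ih, ← act_mul, ← act_mul, ← Units.val_mul, ← Units.val_mul,
            hprdsucc k, mul_assoc]
    -- apply Sanov machinery
    obtain ⟨m', hm'⟩ : ∃ m', m = m' + 1 := ⟨m - 1, by omega⟩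
    rw [hm'] at hclose
    have hchainL : List.Chain' (· ≠ ·) (J m' :: I m' :: L m') := by
      have := hchain (m' + 1)
      rw [hLsucc] at this
      exact (List.isChain_cons_cons.1 this).2
    obtain ⟨jS, σS, hSt⟩ := start (J m') (I m') (L m') false hchainL
    set c : Fin 3 := if J m' = 0 then I m' else J m' with hc
    set v₀ : ℤ × ℤ := pick c with hv₀
    set res : ℤ × ℤ := evalZ (J m' :: I m' :: L m') false v₀ with hres
    -- res ≡ v₀ mod n₀
    have hcast : castP ℓ res = castP ℓ v₀ := by
      rw [hres, cast_evalZ, show (J m' :: I m' :: L m') = L (m' + 1) from (hLsucc m').symm,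
        hevalP (m' + 1), hclose, Units.val_one, act_one]
    -- bounds
    have hbnd := evalZ_bound (J m' :: I m' :: L m') false v₀ 0
      (pick_bound c).1 (pick_bound c).2
    have hlen2 : (J m' :: I m' :: L m').length = 2 * (m' + 1) := by
      rw [show (J m' :: I m' :: L m') = L (m' + 1) from (hLsucc m').symm]
      exact hlen (m' + 1)
    rw [hlen2] at hbnd
    -- m' + 1 ≤ 3ℓ
    have hmle : m' + 1 ≤ 3 * ℓ := by
      have h1 : m' + 1 ≤ Fintype.card T := by omega
      rw [hcardT] at h1
      omega
    have hboundN : (3 : ℤ) ^ (0 + 2 * (m' + 1)) < (n₀ ℓ : ℤ) := by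
      have h1 : ((n₀ ℓ : ℕ) : ℤ) = 3 ^ (6 * ℓ) + 2 := by
        unfold n₀; push_cast; ring
      rw [h1]
      have h2 : (0 : ℕ) + 2 * (m' + 1) ≤ 6 * ℓ := by omega
      calc (3:ℤ) ^ (0 + 2 * (m' + 1)) ≤ 3 ^ (6 * ℓ) :=
            pow_le_pow_right₀ (by norm_num) h2
        _ < 3 ^ (6 * ℓ) + 2 := by omega
    -- St gives both coordinates of res nonzero
    have hSt' : res.1 ≠ 0 ∧ res.2 ≠ 0 := St_ne hSt
    -- one coordinate of v₀ is zero; derive contradiction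
    have hdvd : ∀ a : ℤ, (a : R ℓ) = 0 → |a| ≤ 3 ^ (0 + 2 * (m' + 1)) → a ≠ 0 → False := by
      intro a ha hb hne
      have hd : (n₀ ℓ : ℤ) ∣ a := by
        rwa [ZMod.intCast_zmod_eq_zero_iff_dvd] at ha
      have : (n₀ ℓ : ℤ) ≤ |a| := Int.le_of_dvd (abs_pos.2 hne) ((dvd_abs _ _).2 hd)
      omega
    rcases pick_coord c with h0 | h0
    · have hzc : ((res.1 : ℤ) : R ℓ) = 0 := by
        have := congrArg Prod.fst hcast
        simp only [castP] at this
        rw [this, ← hv₀] at *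
        rw [show v₀.1 = (0:ℤ) from h0]
        simp
      exact hdvd res.1 hzc hbnd.1 hSt'.1
    · have hzc : ((res.2 : ℤ) : R ℓ) = 0 := by
        have := congrArg Prod.snd hcast
        simp only [castP] at this
        rw [this, ← hv₀] at *
        rw [show v₀.2 = (0:ℤ) from h0]
        simp
      exact hdvd res.2 hzc hbnd.2 hSt'.2
  -- pigeonhole
  have hpig : ∃ a b : Fin (Fintype.card T + 1), a ≠ b ∧
      g^[a.1] u₀ = g^[b.1] u₀ := by
    have hcard : Fintype.card T < Fintype.card (Fin (Fintype.card T + 1)) := by simp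
    obtain ⟨a, b, hab, heq⟩ :=
      Fintype.exists_ne_map_eq_of_card_lt (fun k : Fin (Fintype.card T + 1) => g^[k.1] u₀)
        hcard
    exact ⟨a, b, hab, heq⟩
  obtain ⟨a, b, hab, heq⟩ := hpig
  rcases lt_or_gt_of_ne (fun h : a.1 = b.1 => hab (Fin.ext h)) with h | h
  · exact key a.1 b.1 h (by omega) heq
  · exact key b.1 a.1 h (by omega) heq.symm
end Schm

/-- For every positive integer `ℓ`, there exists a graph `G` with maximum
degree 3 and basis number `b(G) ≥ ℓ`. -/
theorem exists_maxDegThree_large_basisNum (ℓ : ℕ) :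
    ∃ G : Multigraph, (∀ v : G.V, G.degree v ≤ 3) ∧ ℓ ≤ G.basisNum := by
  refine ⟨Schm.Gp ℓ, fun v => le_of_eq (Schm.Gp_degree ℓ v), ?_⟩
  have hcardE : Fintype.card (Schm.Gp ℓ).E = 3 * Fintype.card (Schm.Γ ℓ) := by
    have h : Fintype.card ((Schm.Gp ℓ).E) = Fintype.card (Fin 3 × Schm.Γ ℓ) :=
      Fintype.card_congr (Equiv.refl _)
    rw [h, Fintype.card_prod, Fintype.card_fin]
  have hcardV : Fintype.card (Schm.Gp ℓ).V = 2 * Fintype.card (Schm.Γ ℓ) := by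
    have h : Fintype.card ((Schm.Gp ℓ).V) = Fintype.card (Bool × Schm.Γ ℓ) :=
      Fintype.card_congr (Equiv.refl _)
    rw [h, Fintype.card_prod, Fintype.card_bool]
  have hΓpos : 0 < Fintype.card (Schm.Γ ℓ) := Fintype.card_pos
  apply Multigraph.le_basisNum (Schm.Gp ℓ) ℓ (3 * ℓ)
  · omega
  · exact fun x hx hx0 => Schm.Gp_minwt ℓ x hx hx0
  · rw [hcardE, hcardV]
    have h1 : 3 * Fintype.card (Schm.Γ ℓ) - 2 * Fintype.card (Schm.Γ ℓ)
        = Fintype.card (Schm.Γ ℓ) := by omega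
    rw [h1]
    exact le_of_eq (by ring)
end
end
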